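/- Let F be a Minkowski norm on ℝⁿ with strict triangle inequality, and let 𝓛 denote its Legendre transformation (which is injective on ℝⁿ∖{0}). Given three distinct unit vectors X, Y, Z (F(X)=F(Y)=F(Z)=1), the subspace {W ∈ ℝⁿ : 𝓛_X(W) = 𝓛_Y(W) = 𝓛_Z(W)} has dimension at most n − 2, where 𝓛_X(W) := g_X(X, W) is the linear functional given by the fundamental tensor at X. -/

import Mathlib

open Filter Topology Module

structure MinkowskiNorm (n : ℕ) where
  F : EuclideanSpace ℝ (Fin n) → ℝ
  nonneg : ∀ v, 0 ≤ F v
  eq_zero_iff : ∀ v, F v = 0 ↔ v = 0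
  homog : ∀ (c : ℝ) (v : EuclideanSpace ℝ (Fin n)), 0 < c → F (c • v) = c * F v
  triangle : ∀ u v, F (u + v) ≤ F u + F v
  triangle_strict : ∀ u v, u ≠ 0 → v ≠ 0 → F (u + v) = F u + F v →
    ∃ β : ℝ, 0 ≤ β ∧ u = β • v

lemma mn_ne_zero {n : ℕ} (N : MinkowskiNorm n) {v : EuclideanSpace ℝ (Fin n)}
    (h : N.F v = 1) : v ≠ 0 := by
  intro h0
  have := (N.eq_zero_iff v).2 h0
  rw [h] at this
  exact one_ne_zero this

lemma leg_self {n : ℕ} (N : MinkowskiNorm n)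
    (Leg : EuclideanSpace ℝ (Fin n) → (EuclideanSpace ℝ (Fin n) →ₗ[ℝ] ℝ))
    (hLeg : ∀ y w, Leg y w = (1/2) * deriv (fun s : ℝ => (N.F (y + s • w))^2) 0)
    {y : EuclideanSpace ℝ (Fin n)} (hy : N.F y = 1) : Leg y y = 1 := by
  rw [hLeg]
  have hev : (fun s : ℝ => (N.F (y + s • y))^2) =ᶠ[𝓝 (0:ℝ)] (fun s => (1+s)^2) := by
    filter_upwards [isOpen_Ioi.mem_nhds (show (-1:ℝ) < 0 by norm_num)] with s hs
    have h1 : (0:ℝ) < 1 + s := by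
      by_contra hc; push_neg at hc; simp [Set.mem_Ioi] at hs; linarith
    have h2 : y + s • y = (1 + s) • y := by module
    rw [h2, N.homog _ _ h1, hy]
    ring
  rw [hev.deriv_eq]
  have hd : HasDerivAt (fun s : ℝ => (1+s)^2) 2 0 := by
    have := ((hasDerivAt_id (0:ℝ)).const_add 1).pow 2
    simpa [Pi.pow_def] using this
  rw [hd.deriv]
  norm_num

lemma leg_lt_one {n : ℕ} (N : MinkowskiNorm n)
    (Leg : EuclideanSpace ℝ (Fin n) → (EuclideanSpace ℝ (Fin n) →ₗ[ℝ] ℝ))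
    (hLeg : ∀ y w, Leg y w = (1/2) * deriv (fun s : ℝ => (N.F (y + s • w))^2) 0)
    {u w : EuclideanSpace ℝ (Fin n)} (hu : N.F u = 1) (hw : N.F w = 1)
    (huw : u ≠ w) : Leg u w < 1 := by
  have hu0 : u ≠ 0 := mn_ne_zero N hu
  have hw0 : w ≠ 0 := mn_ne_zero N hw
  set M : ℝ := N.F (u + w) with hMdef
  have hM2 : M < 2 := by
    rcases lt_or_eq_of_le (N.triangle u w) with h | h
    · rw [hu, hw] at h; linarith
    · exfalso
      obtain ⟨β, hβ0, hβ⟩ := N.triangle_strict u w hu0 hw0 h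
      rcases eq_or_lt_of_le hβ0 with hb | hb
      · exact hu0 (by rw [hβ, ← hb, zero_smul])
      · have : N.F u = β * N.F w := by rw [hβ, N.homog _ _ hb]
        rw [hu, hw] at this
        have hβ1 : β = 1 := by linarith
        exact huw (by rw [hβ, hβ1, one_smul])
  set ψ : ℝ → ℝ := fun s => (N.F (u + s • w))^2 with hψdef
  rw [hLeg]
  by_cases hd : DifferentiableAt ℝ ψ 0
  · have hψ0 : ψ 0 = 1 := by simp [hψdef, hu]
    have hslope : Tendsto (slope ψ 0) (𝓝[>] (0:ℝ)) (𝓝 (deriv ψ 0)) :=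
      (hasDerivAt_iff_tendsto_slope.mp hd.hasDerivAt).mono_left
        (nhdsWithin_mono _ (fun x hx => ne_of_gt hx))
    have hbound : ∀ᶠ s in 𝓝[>] (0:ℝ), slope ψ 0 s ≤ 2*(M-1) + s*(M-1)^2 := by
      filter_upwards [Ioo_mem_nhdsGT_of_mem (show (0:ℝ) ∈ Set.Ico 0 1 by norm_num)]
        with s hs
      obtain ⟨hs0, hs1⟩ := hs
      have key : N.F (u + s • w) ≤ 1 + s * (M - 1) := by
        have heq : u + s • w = (1 - s) • u + s • (u + w) := by module
        calc N.F (u + s • w) ≤ N.F ((1-s)•u) + N.F (s•(u+w)) := by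
              rw [heq]; exact N.triangle _ _
          _ = (1-s) * N.F u + s * M := by
              rw [N.homog _ _ (by linarith), N.homog _ _ hs0]
          _ = 1 + s * (M - 1) := by rw [hu]; ring
      have hFnn : 0 ≤ N.F (u + s • w) := N.nonneg _
      have hψs : ψ s ≤ (1 + s*(M-1))^2 := by
        have := pow_le_pow_left₀ hFnn key 2
        simpa [hψdef] using this
      have : slope ψ 0 s = (ψ s - 1) / s := by
        rw [slope_def_field, hψ0, sub_zero]
      rw [this, div_le_iff₀ hs0]
      nlinarith [hψs]
    have hlim : Tendsto (fun s : ℝ => 2*(M-1) + s*(M-1)^2) (𝓝[>] (0:ℝ))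
        (𝓝 (2*(M-1))) := by
      have hc : Continuous (fun s : ℝ => 2*(M-1) + s*(M-1)^2) := by continuity
      have h2 : Tendsto (fun s : ℝ => 2*(M-1) + s*(M-1)^2) (𝓝[>] (0:ℝ))
          (𝓝 (2*(M-1) + 0*(M-1)^2)) := (hc.tendsto 0).mono_left nhdsWithin_le_nhds
      simpa using h2
    have hderiv : deriv ψ 0 ≤ 2*(M-1) :=
      le_of_tendsto_of_tendsto hslope hlim hbound
    linarith
  · rw [deriv_zero_of_not_differentiableAt hd]
    norm_num

lemma functional_smul {V : Type*} [AddCommGroup V] [Module ℝ V]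
    (f g : V →ₗ[ℝ] ℝ) (hf : f ≠ 0) (hk : LinearMap.ker f ≤ LinearMap.ker g) :
    ∃ c : ℝ, ∀ v, g v = c * f v := by
  obtain ⟨x, hx⟩ : ∃ x, f x ≠ 0 := by
    by_contra h'
    push_neg at h'
    exact hf (LinearMap.ext fun v => by simpa using h' v)
  refine ⟨g x / f x, fun v => ?_⟩
  have hv : v - (f v / f x) • x ∈ LinearMap.ker f := by
    rw [LinearMap.mem_ker, map_sub, map_smul]
    rw [smul_eq_mul]
    field_simp
    ring
  have hg : g (v - (f v / f x) • x) = 0 := hk hv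
  rw [map_sub, map_smul, sub_eq_zero] at hg
  rw [hg]
  rw [smul_eq_mul]
  field_simp

lemma arith_key (c p q r s t v : ℝ) (e1 : 1 - t = c * (1 - r))
    (e2 : p - v = c * (p - 1)) (e3 : q - 1 = c * (q - s))
    (hp : p < 1) (hq : q < 1) (hr : r < 1) (hs : s < 1) (ht : t < 1) (hv : v < 1) :
    False := by
  have hc0 : 0 < c := by nlinarith
  have hc1 : c < 1 := by nlinarith
  nlinarith [mul_pos hc0 (sub_pos.mpr hs), mul_pos (sub_pos.mpr hc1) (sub_pos.mpr hq)]

/-- Given the Legendre transformation `Leg` of a Minkowski norm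
(`Leg y = g_y(y, ·) = ½ D(F²)(y)`, injective away from the origin), for three
distinct unit vectors `X, Y, Z` the subspace
`{W : 𝓛_X(W) = 𝓛_Y(W) = 𝓛_Z(W)}` has dimension at most `n − 2`. -/
theorem stmt1 {n : ℕ} (N : MinkowskiNorm n)
    (Leg : EuclideanSpace ℝ (Fin n) → (EuclideanSpace ℝ (Fin n) →ₗ[ℝ] ℝ))
    (hLeg : ∀ y w, Leg y w = (1/2) * deriv (fun s : ℝ => (N.F (y + s • w))^2) 0)
    (hinj : ∀ y z : EuclideanSpace ℝ (Fin n), y ≠ 0 → z ≠ 0 → Leg y = Leg z → y = z)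
    (X Y Z : EuclideanSpace ℝ (Fin n))
    (hX : N.F X = 1) (hY : N.F Y = 1) (hZ : N.F Z = 1)
    (hXY : X ≠ Y) (hXZ : X ≠ Z) (hYZ : Y ≠ Z) :
    Module.finrank ℝ
      ↥(LinearMap.ker (Leg X - Leg Y) ⊓ LinearMap.ker (Leg X - Leg Z)) ≤ n - 2 := by
  have hX0 : X ≠ 0 := mn_ne_zero N hX
  have hY0 : Y ≠ 0 := mn_ne_zero N hY
  have hZ0 : Z ≠ 0 := mn_ne_zero N hZ
  set f := Leg X - Leg Y with hfdef
  set g := Leg X - Leg Z with hgdef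
  have hf : f ≠ 0 := by
    intro h
    exact hXY (hinj X Y hX0 hY0 (sub_eq_zero.mp h))
  have hg : g ≠ 0 := by
    intro h
    exact hXZ (hinj X Z hX0 hZ0 (sub_eq_zero.mp h))
  -- the key: ker f is not contained in ker g
  have hker : ¬ (LinearMap.ker f ≤ LinearMap.ker g) := by
    intro hle
    obtain ⟨c, hc⟩ := functional_smul f g hf hle
    have hw : ∀ w, Leg X w - Leg Z w = c * (Leg X w - Leg Y w) := by
      intro w
      have := hc w
      simpa [hfdef, hgdef, LinearMap.sub_apply] using this
    have sXX : Leg X X = 1 := leg_self N Leg hLeg hX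
    have sYY : Leg Y Y = 1 := leg_self N Leg hLeg hY
    have sZZ : Leg Z Z = 1 := leg_self N Leg hLeg hZ
    have lXY : Leg X Y < 1 := leg_lt_one N Leg hLeg hX hY hXY
    have lYX : Leg Y X < 1 := leg_lt_one N Leg hLeg hY hX hXY.symm
    have lXZ : Leg X Z < 1 := leg_lt_one N Leg hLeg hX hZ hXZ
    have lZX : Leg Z X < 1 := leg_lt_one N Leg hLeg hZ hX hXZ.symm
    have lYZ : Leg Y Z < 1 := leg_lt_one N Leg hLeg hY hZ hYZ
    have lZY : Leg Z Y < 1 := leg_lt_one N Leg hLeg hZ hY hYZ.symm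
    have eX := hw X
    have eY := hw Y
    have eZ := hw Z
    rw [sXX] at eX
    rw [sYY] at eY
    rw [sZZ] at eZ
    exact arith_key c (Leg X Y) (Leg X Z) (Leg Y X) (Leg Y Z) (Leg Z X) (Leg Z Y)
      eX eY eZ lXY lXZ lYX lYZ lZX lZY
  have hlt : LinearMap.ker f ⊓ LinearMap.ker g < LinearMap.ker f := by
    refine lt_of_le_of_ne inf_le_left fun he => hker ?_
    exact he.symm.le.trans inf_le_right
  have hfin : finrank ℝ ↥(LinearMap.ker f ⊓ LinearMap.ker g)
      < finrank ℝ ↥(LinearMap.ker f) := Submodule.finrank_lt_finrank_of_lt hlt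
  have hrange : finrank ℝ ↥(LinearMap.range f) = 1 := by
    have h1 : LinearMap.range f ≠ ⊥ := by rwa [Ne, LinearMap.range_eq_bot]
    have h2 : finrank ℝ ↥(LinearMap.range f) ≤ 1 := by
      have := Submodule.finrank_le (LinearMap.range f)
      simpa using this
    have h3 : finrank ℝ ↥(LinearMap.range f) ≠ 0 := by
      rw [Ne, Submodule.finrank_eq_zero]
      exact h1
    omega
  have htot := LinearMap.finrank_range_add_finrank_ker f
  rw [hrange, finrank_euclideanSpace_fin] at htot
  omega
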